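/- Let A_1,...,A_n be events in a probability space with P(A_i)>0 for all i. Then P(⋃_{i=1}^n A_i) ≥ n² / (∑_{i=1}^n ∑_{j=1}^n P(A_i ∩ A_j)/(P(A_i)P(A_j))). -/

import Mathlib

open MeasureTheory

/-- Second-moment lower bound on the probability of a union:
`P(⋃ i, A i) ≥ n² / (∑ i ∑ j P(A i ∩ A j) / (P(A i) P(A j)))`. -/
theorem union_lower_bound {Ω : Type*} [MeasurableSpace Ω] (P : Measure Ω)
    [IsProbabilityMeasure P] (n : ℕ) (hn : 0 < n) (A : Fin n → Set Ω)
    (hmeas : ∀ i, MeasurableSet (A i)) (hpos : ∀ i, 0 < (P (A i)).toReal) :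
    (P (⋃ i, A i)).toReal ≥
      (n : ℝ) ^ 2 /
        ∑ i, ∑ j, (P (A i ∩ A j)).toReal / ((P (A i)).toReal * (P (A j)).toReal) := by
  classical
  set p : Fin n → ℝ := fun i => (P (A i)).toReal with hp
  set S : ℝ := ∑ i, ∑ j, (P (A i ∩ A j)).toReal / (p i * p j) with hS
  set U : Set Ω := ⋃ i, A i with hU
  have hUmeas : MeasurableSet U := MeasurableSet.iUnion hmeas
  have hfin : ∀ s : Set Ω, P s ≠ ⊤ := fun s => measure_ne_top P s
  -- the functions
  set f : Ω → ℝ := fun ω => ∑ i, Set.indicator (A i) (fun _ => (p i)⁻¹) ω with hf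
  set g : Ω → ℝ := fun ω => Set.indicator U (fun _ => (1 : ℝ)) ω with hg
  have hfint : ∀ i : Fin n, Integrable (Set.indicator (A i) (fun _ => (p i)⁻¹)) P :=
    fun i => (integrable_const _).indicator (hmeas i)
  have hf_nonneg : ∀ ω, 0 ≤ f ω := by
    intro ω
    exact Finset.sum_nonneg fun i _ => Set.indicator_nonneg (fun _ _ => by positivity) ω
  have hg_nonneg : ∀ ω, 0 ≤ g ω :=
    fun ω => Set.indicator_nonneg (fun _ _ => zero_le_one) ω
  -- f = f * g
  have hfg : ∀ ω, f ω * g ω = f ω := by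
    intro ω
    by_cases hω : ω ∈ U
    · simp [hg, Set.indicator_of_mem hω]
    · have : f ω = 0 := by
        apply Finset.sum_eq_zero
        intro i _
        have : ω ∉ A i := fun h => hω (Set.mem_iUnion.2 ⟨i, h⟩)
        simp [Set.indicator_of_notMem this]
      simp [this]
  -- integral of f
  have hintf : ∫ ω, f ω ∂P = (n : ℝ) := by
    rw [hf]
    rw [integral_finset_sum _ fun i _ => hfint i]
    have : ∀ i : Fin n, ∫ ω, Set.indicator (A i) (fun _ => (p i)⁻¹) ω ∂P = 1 := by
      intro i
      rw [integral_indicator_const _ (hmeas i)]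
      simp only [smul_eq_mul, measureReal_def]
      rw [mul_inv_cancel₀ (hpos i).ne']
    simp [this]
  -- integral of f^2
  have hintf2 : ∫ ω, f ω ^ 2 ∂P = S := by
    have hexp : ∀ ω, f ω ^ 2 = ∑ i, ∑ j,
        Set.indicator (A i ∩ A j) (fun _ => (p i)⁻¹ * (p j)⁻¹) ω := by
      intro ω
      rw [sq, hf, Finset.sum_mul_sum]
      refine Finset.sum_congr rfl fun i _ => Finset.sum_congr rfl fun j _ => ?_
      exact (Set.inter_indicator_mul _ _ ω).symm
    simp_rw [hexp]
    rw [integral_finset_sum _ fun i _ => integrable_finset_sum _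
      fun j _ => (integrable_const _).indicator ((hmeas i).inter (hmeas j))]
    rw [hS]
    refine Finset.sum_congr rfl fun i _ => ?_
    rw [integral_finset_sum _ fun j _ => (integrable_const _).indicator ((hmeas i).inter (hmeas j))]
    refine Finset.sum_congr rfl fun j _ => ?_
    rw [integral_indicator_const _ ((hmeas i).inter (hmeas j))]
    simp only [smul_eq_mul, measureReal_def]
    rw [div_eq_mul_inv, mul_inv]
  -- integral of g^2
  have hintg2 : ∫ ω, g ω ^ 2 ∂P = (P U).toReal := by
    have : ∀ ω, g ω ^ 2 = Set.indicator U (fun _ => (1 : ℝ)) ω := by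
      intro ω; rw [hg]
      by_cases hω : ω ∈ U <;> simp [Set.indicator_of_mem, Set.indicator_of_notMem, hω]
    simp_rw [this]
    rw [integral_indicator_const _ hUmeas]; simp [measureReal_def]
  -- Memℒp
  have hfmem : MemLp f 2 P := by
    rw [hf]
    exact memLp_finset_sum _ fun i _ => memLp_indicator_const 2 (hmeas i) _ (Or.inr (hfin _))
  have hgmem : MemLp g 2 P := memLp_indicator_const 2 hUmeas _ (Or.inr (hfin _))
  -- Cauchy–Schwarz
  have hCS := integral_mul_le_Lp_mul_Lq_of_nonneg (Real.holderConjugate_iff_eq_conjExponent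
      (by norm_num) |>.2 (by norm_num) : Real.HolderConjugate 2 2)
    (Filter.Eventually.of_forall hf_nonneg) (Filter.Eventually.of_forall hg_nonneg)
    (by simpa using hfmem) (by simpa using hgmem)
  simp_rw [hfg] at hCS
  have hrpow2 : ∀ h : Ω → ℝ, (fun ω => h ω ^ (2 : ℝ)) = fun ω => h ω ^ 2 := by
    intro h; funext ω; rw [show (2:ℝ) = ((2:ℕ):ℝ) by norm_num, Real.rpow_natCast]
  rw [show (fun a => f a ^ (2:ℝ)) = (fun a => f a ^ 2) from hrpow2 f,
    show (fun a => g a ^ (2:ℝ)) = (fun a => g a ^ 2) from hrpow2 g,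
    hintf, hintf2, hintg2, ← Real.sqrt_eq_rpow, ← Real.sqrt_eq_rpow] at hCS
  -- positivity of S
  have hSnn : 0 ≤ S := Finset.sum_nonneg fun i _ => Finset.sum_nonneg fun j _ =>
    div_nonneg ENNReal.toReal_nonneg (mul_nonneg ENNReal.toReal_nonneg ENNReal.toReal_nonneg)
  have hSpos : 0 < S := by
    have i0 : Fin n := ⟨0, hn⟩
    refine Finset.sum_pos' (fun i _ => Finset.sum_nonneg fun j _ =>
      div_nonneg ENNReal.toReal_nonneg (mul_nonneg ENNReal.toReal_nonneg ENNReal.toReal_nonneg))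
      ⟨i0, Finset.mem_univ _, ?_⟩
    refine Finset.sum_pos' (fun j _ =>
      div_nonneg ENNReal.toReal_nonneg (mul_nonneg ENNReal.toReal_nonneg ENNReal.toReal_nonneg))
      ⟨i0, Finset.mem_univ _, ?_⟩
    rw [Set.inter_self]
    exact div_pos (hpos i0) (mul_pos (hpos i0) (hpos i0))
  have hPUnn : (0:ℝ) ≤ (P U).toReal := ENNReal.toReal_nonneg
  -- square
  have hsq : (n : ℝ) ^ 2 ≤ S * (P U).toReal := by
    have h1 : (n : ℝ) ≤ Real.sqrt (S * (P U).toReal) := by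
      rwa [Real.sqrt_mul hSnn]
    calc (n : ℝ) ^ 2 ≤ Real.sqrt (S * (P U).toReal) ^ 2 := by
          apply pow_le_pow_left₀ (by positivity) h1
      _ = S * (P U).toReal := Real.sq_sqrt (by positivity)
  rw [ge_iff_le, div_le_iff₀ hSpos]
  linarith
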